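/- Godunov's theorem: if a system of conservation laws ∂Q/∂t + Σ_m ∂F_m/∂x_m = 0 can be symmetrized by new variables W (i.e., Q = Q(W) with ∂Q/∂W symmetric positive definite and ∂F_m/∂W symmetric), and there exists a scalar potential Φ(W) with Qᵀ = ∂Φ/∂W and potentials Ψ_m with F_mᵀ = ∂Ψ_m/∂W, then S(Q) := WᵀQ − Φ is an entropy function with entropy fluxes F̂_m := WᵀF_m − Ψ_m, i.e., ∂S/∂Q = Wᵀ and ∂F̂_m/∂Q = Wᵀ ∂F_m/∂Q. -/

import Mathlib

noncomputable section

open Matrix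


lemma hasFDerivAt_dot (f g : (Fin 5 → ℝ) → Fin 5 → ℝ)
    (hf : Differentiable ℝ f) (hg : Differentiable ℝ g) (w : Fin 5 → ℝ) :
    HasFDerivAt (fun v => f v ⬝ᵥ g v)
      (∑ i : Fin 5,
        (f w i • ((ContinuousLinearMap.proj i).comp (fderiv ℝ g w))
          + g w i • ((ContinuousLinearMap.proj i).comp (fderiv ℝ f w)))) w := by
  have hfi : ∀ i, HasFDerivAt (fun v => f v i)
      ((ContinuousLinearMap.proj i).comp (fderiv ℝ f w)) w :=
    fun i => (ContinuousLinearMap.proj (R := ℝ) (φ := fun _ : Fin 5 => ℝ) i).hasFDerivAt.comp w (hf w).hasFDerivAt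
  have hgi : ∀ i, HasFDerivAt (fun v => g v i)
      ((ContinuousLinearMap.proj i).comp (fderiv ℝ g w)) w :=
    fun i => (ContinuousLinearMap.proj (R := ℝ) (φ := fun _ : Fin 5 => ℝ) i).hasFDerivAt.comp w (hg w).hasFDerivAt
  have := HasFDerivAt.fun_sum (fun i (_ : i ∈ Finset.univ) => (hfi i).mul (hgi i))
  simpa [dotProduct] using this

lemma dot_fderiv (f g : (Fin 5 → ℝ) → Fin 5 → ℝ)
    (hf : Differentiable ℝ f) (hg : Differentiable ℝ g) (w h : Fin 5 → ℝ) :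
    fderiv ℝ (fun v => f v ⬝ᵥ g v) w h = fderiv ℝ f w h ⬝ᵥ g w + f w ⬝ᵥ fderiv ℝ g w h := by
  rw [(hasFDerivAt_dot f g hf hg w).fderiv]
  simp [dotProduct, Finset.mul_sum, mul_comm, ContinuousLinearMap.sum_apply]
  rw [Finset.sum_add_distrib]
  ring

/-- Godunov's theorem: if a system of conservation laws is
symmetrized by variables `W` (Jacobian `∂Q/∂W` symmetric positive definite,
`∂F_m/∂W` symmetric) and there are potentials `Φ`, `Ψ_m` with `Qᵀ = ∂Φ/∂W`,
`F_mᵀ = ∂Ψ_m/∂W`, then `S := WᵀQ - Φ` is an entropy function with entropy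
fluxes `F̂_m := WᵀF_m - Ψ_m`; in `W`-coordinates this means
`DS(w) = wᵀ DQ(w)` (i.e. `∂S/∂Q = Wᵀ`) and `DF̂_m(w) = wᵀ DF_m(w)`
(i.e. `∂F̂_m/∂Q = Wᵀ ∂F_m/∂Q`). -/
theorem godunov_entropy_pair
    (Q : (Fin 5 → ℝ) → Fin 5 → ℝ)
    (F : Fin 3 → (Fin 5 → ℝ) → Fin 5 → ℝ)
    (Φ : (Fin 5 → ℝ) → ℝ)
    (Ψ : Fin 3 → (Fin 5 → ℝ) → ℝ)
    (hQ : Differentiable ℝ Q)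
    (hF : ∀ m, Differentiable ℝ (F m))
    (hΦ : Differentiable ℝ Φ)
    (hΨ : ∀ m, Differentiable ℝ (Ψ m))
    -- Jacobian ∂Q/∂W symmetric positive definite
    (hQsymm : ∀ w h k, h ⬝ᵥ fderiv ℝ Q w k = k ⬝ᵥ fderiv ℝ Q w h)
    (hQpos : ∀ w h, h ≠ 0 → 0 < h ⬝ᵥ fderiv ℝ Q w h)
    -- Jacobians ∂F_m/∂W symmetric
    (hFsymm : ∀ m w h k, h ⬝ᵥ fderiv ℝ (F m) w k = k ⬝ᵥ fderiv ℝ (F m) w h)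
    -- Qᵀ = ∂Φ/∂W  and  F_mᵀ = ∂Ψ_m/∂W
    (hgradΦ : ∀ w h, fderiv ℝ Φ w h = Q w ⬝ᵥ h)
    (hgradΨ : ∀ m w h, fderiv ℝ (Ψ m) w h = F m w ⬝ᵥ h) :
    (∀ w h, fderiv ℝ (fun v => v ⬝ᵥ Q v - Φ v) w h = w ⬝ᵥ fderiv ℝ Q w h) ∧
    (∀ m w h, fderiv ℝ (fun v => v ⬝ᵥ F m v - Ψ m v) w h = w ⬝ᵥ fderiv ℝ (F m) w h) := by

  have hid : Differentiable ℝ (fun v : Fin 5 → ℝ => v) := differentiable_fun_id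
  have key : ∀ (G : (Fin 5 → ℝ) → Fin 5 → ℝ) (P : (Fin 5 → ℝ) → ℝ),
      Differentiable ℝ G → Differentiable ℝ P →
      (∀ w h, fderiv ℝ P w h = G w ⬝ᵥ h) →
      ∀ w h, fderiv ℝ (fun v => v ⬝ᵥ G v - P v) w h = w ⬝ᵥ fderiv ℝ G w h := by
    intro G P hG hP hgrad w h
    have hdot : DifferentiableAt ℝ (fun v => v ⬝ᵥ G v) w :=
      (hasFDerivAt_dot _ G hid hG w).differentiableAt
    rw [fderiv_fun_sub hdot (hP w), ContinuousLinearMap.sub_apply,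
      dot_fderiv _ G hid hG w h, hgrad w h]
    have : fderiv ℝ (fun v : Fin 5 → ℝ => v) w h = h := by
      rw [fderiv_id']; rfl
    rw [this, dotProduct_comm h (G w)]
    ring
  exact ⟨key Q Φ hQ hΦ hgradΦ, fun m => key (F m) (Ψ m) (hF m) (hΨ m) (hgradΨ m)⟩
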